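/- Let M ⊆ ℤ^d be a finitely generated additive monoid and let A ∈ ℤ^{d×n} be a matrix. Then there are only finitely many fibers of A that are atomic with respect to M; that is, the collection of sets {P^I_{A,b} : b ∈ M and P^I_{A,b} is atomic w.r.t. M} is finite. -/

import Mathlib

open Pointwise

open scoped Classical

/-- The fiber `P^I_{A,b} = {z ∈ ℤ^n : z ≥ 0, Az = b}` of `b` under the matrix `A`. -/
def fiber {d n : ℕ} (A : Matrix (Fin d) (Fin n) ℤ) (b : Fin d → ℤ) : Set (Fin n → ℤ) :=
  {z | 0 ≤ z ∧ A.mulVec z = b}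

/-- A fiber `P^I_{A,b}` with `b ∈ M` is atomic w.r.t. the monoid `M` if there is no
decomposition `b = b₁ + b₂` with `b₁, b₂ ∈ M ∖ {0}` and
`P^I_{A,b} = P^I_{A,b₁} + P^I_{A,b₂}` (Minkowski sum). -/
def IsAtomicFiber {d n : ℕ} (A : Matrix (Fin d) (Fin n) ℤ) (M : AddSubmonoid (Fin d → ℤ))
    (b : Fin d → ℤ) : Prop :=
  b ∈ M ∧ ¬ ∃ b₁ b₂ : Fin d → ℤ, b₁ ∈ M ∧ b₂ ∈ M ∧ b₁ ≠ 0 ∧ b₂ ≠ 0 ∧ b = b₁ + b₂ ∧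
    fiber A b = fiber A b₁ + fiber A b₂

section Aux


/-- Reverse inclusion relation on sets. -/
def upRel (γ : Type*) : Set γ → Set γ → Prop := fun U V => V ⊆ U

instance (γ : Type*) : IsRefl (Set γ) (upRel γ) := ⟨fun _ => subset_rfl⟩
instance (γ : Type*) : IsTrans (Set γ) (upRel γ) :=
  ⟨fun _ _ _ h h' => Set.Subset.trans h' h⟩
instance (γ : Type*) : IsPreorder (Set γ) (upRel γ) where
  refl := fun _ => subset_rfl
  trans := fun _ _ _ h h' => Set.Subset.trans h' h

/-- index bound for Higman embeddings -/
lemma sublistForall₂_get {γ : Type*} {r : γ → γ → Prop} :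
    ∀ {l₁ l₂ : List γ}, List.SublistForall₂ r l₁ l₂ →
      ∀ p (hp : p < l₁.length), ∃ q, p ≤ q ∧ ∃ hq : q < l₂.length,
        r (l₁[p]'hp) (l₂[q]'hq) := by
  intro l₁ l₂ h
  induction h with
  | nil => intro p hp; simp at hp
  | @cons a b t₁ t₂ hab _ ih =>
    intro p hp
    match p with
    | 0 => exact ⟨0, le_refl _, by simp, hab⟩
    | p + 1 =>
      obtain ⟨q, hpq, hq, hr⟩ := ih p (by simpa using hp)
      exact ⟨q + 1, by omega, by simpa using hq, hr⟩
  | @cons_right b t₁ t₂ _ ih =>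
    intro p hp
    obtain ⟨q, hpq, hq, hr⟩ := ih p hp
    exact ⟨q + 1, by omega, by simpa using hq, hr⟩

/-- ascending chains of upper sets over a pwo base stabilize -/
lemma upper_chain_stab {β : Type*} [Preorder β]
    (hβ : (Set.univ : Set β).PartiallyWellOrderedOn (· ≤ ·))
    (g : ℕ → Set β) (hup : ∀ t, IsUpperSet (g t)) (hmono : Monotone g) :
    ∃ N, ∀ t, N ≤ t → g t = g N := by
  by_contra h
  push_neg at h
  have key : ∀ N : ℕ, ∃ t, N < t ∧ ∃ x, x ∈ g t ∧ x ∉ g N := by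
    intro N
    obtain ⟨t, hNt, hne⟩ := h N
    have hsub : g N ⊆ g t := hmono hNt
    have : ¬ g t ⊆ g N := fun hc => hne (le_antisymm hc hsub)
    obtain ⟨x, hx1, hx2⟩ := Set.not_subset.1 this
    refine ⟨t, lt_of_le_of_ne hNt ?_, x, hx1, hx2⟩
    rintro rfl; exact hne rfl
  choose T hT x hx1 hx2 using key
  set Nseq : ℕ → ℕ := fun j => Nat.rec 0 (fun _ prev => T prev) j with hNseq
  have hNsucc : ∀ j, Nseq (j + 1) = T (Nseq j) := fun j => rfl
  have hNmono : ∀ i j, i ≤ j → Nseq i ≤ Nseq j := by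
    intro i j hij
    induction j with
    | zero =>
      have hi : i = 0 := by omega
      subst hi; exact le_refl _
    | succ j ih =>
      rcases Nat.lt_or_ge i (j+1) with h'|h'
      · exact le_trans (ih (by omega)) (by rw [hNsucc]; exact (hT (Nseq j)).le)
      · have hi : i = j + 1 := by omega
        subst hi; exact le_refl _
  obtain ⟨i, j, hij, hle⟩ := hβ.exists_lt (f := fun j => x (Nseq j)) (fun _ => Set.mem_univ _)
  have h1 : x (Nseq i) ∈ g (Nseq (i + 1)) := hx1 _
  have h2 : g (Nseq (i + 1)) ⊆ g (Nseq j) := hmono (hNmono (i+1) j hij)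
  exact hx2 (Nseq j) (hup _ hle (h2 h1))

/-- Induction step: upper sets of `ℕ × β` are pwo under reverse inclusion. -/
lemma pwoUpper_step {β : Type*} [Preorder β]
    (hβ : (Set.univ : Set β).PartiallyWellOrderedOn (· ≤ ·))
    (hU : {U : Set β | IsUpperSet U}.PartiallyWellOrderedOn (upRel β)) :
    {U : Set (ℕ × β) | IsUpperSet U}.PartiallyWellOrderedOn (upRel (ℕ × β)) := by
  rw [Set.partiallyWellOrderedOn_iff_exists_lt]
  intro f hf
  set u : ℕ → ℕ → Set β := fun i t => {x | (t, x) ∈ f i} with hu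
  have hupper : ∀ i t, IsUpperSet (u i t) := by
    intro i t x y hxy hx
    exact hf i (Prod.mk_le_mk.2 ⟨le_refl t, hxy⟩) hx
  have humono : ∀ i, Monotone (u i) := by
    intro i t t' htt' x hx
    exact hf i (Prod.mk_le_mk.2 ⟨htt', le_refl x⟩) hx
  have hstab : ∀ i, ∃ N, ∀ t, N ≤ t → u i t = u i N := fun i =>
    upper_chain_stab hβ (u i) (hupper i) (humono i)
  choose N hN using hstab
  have hList := Set.PartiallyWellOrderedOn.partiallyWellOrderedOn_sublistForall₂ (upRel β) hU
  have hprod := hU.prod hList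
  set F : ℕ → Set β × List (Set β) :=
    fun i => (u i (N i), (List.range (N i + 1)).map (u i)) with hF
  have hFmem : ∀ i, F i ∈ {U : Set β | IsUpperSet U} ×ˢ
      {l : List (Set β) | ∀ x, x ∈ l → x ∈ {U : Set β | IsUpperSet U}} := by
    intro i
    refine ⟨hupper i (N i), ?_⟩
    intro x hx
    simp only [hF, List.mem_map, List.mem_range] at hx
    obtain ⟨t, -, rfl⟩ := hx
    exact hupper i t
  obtain ⟨i, j, hij, h1, h2⟩ := hprod.exists_lt (f := F) hFmem
  refine ⟨i, j, hij, ?_⟩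
  rintro ⟨t, x⟩ hx
  have hxj : x ∈ u j t := hx
  have hjNj : u j t ⊆ u j (N j) := by
    rcases le_or_gt t (N j) with h | h
    · exact humono j h
    · exact le_of_eq (hN j t h.le)
  show x ∈ u i t
  by_cases ht : t ≤ N i
  · have hlen : t < ((List.range (N i + 1)).map (u i)).length := by
      simp only [List.length_map, List.length_range]; omega
    obtain ⟨q, htq, hq, hr⟩ := sublistForall₂_get h2 t hlen
    have hq' : q < N j + 1 := by
      simpa only [hF, List.length_map, List.length_range] using hq
    have hgi : ((List.range (N i + 1)).map (u i))[t]'hlen = u i t := by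
      simp
    have hgj : ((List.range (N j + 1)).map (u j))[q]'hq = u j q := by
      simp
    rw [hgi, hgj] at hr
    exact hr (humono j htq hxj)
  · have : u i t = u i (N i) := hN i t (by omega)
    rw [this]
    exact h1 (hjNj hxj)

/-- transfer along an order isomorphism -/
lemma pwoUpper_transfer {α β : Type*} [Preorder α] [Preorder β] (e : α ≃o β)
    (h : {U : Set α | IsUpperSet U}.PartiallyWellOrderedOn (upRel α)) :
    {U : Set β | IsUpperSet U}.PartiallyWellOrderedOn (upRel β) := by
  rw [Set.partiallyWellOrderedOn_iff_exists_lt]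
  intro f hf
  obtain ⟨i, j, hij, hsub⟩ := h.exists_lt (f := fun i => e ⁻¹' (f i)) (fun i => (hf i).preimage e.monotone)
  refine ⟨i, j, hij, ?_⟩
  intro x hx
  have hmem : e.symm x ∈ e ⁻¹' (f j) := by
    simp only [Set.mem_preimage, OrderIso.apply_symm_apply]
    exact hx
  have := hsub hmem
  simpa only [Set.mem_preimage, OrderIso.apply_symm_apply] using this

/-- Maclagan-type theorem: upper sets of `ℕ^m` are pwo under reverse inclusion. -/
lemma pwoUpper : ∀ m : ℕ,
    {U : Set (Fin m → ℕ) | IsUpperSet U}.PartiallyWellOrderedOn (upRel (Fin m → ℕ)) := by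
  intro m
  induction m with
  | zero =>
    rw [Set.partiallyWellOrderedOn_iff_exists_lt]
    intro f hf
    haveI : Finite (Set (Fin 0 → ℕ)) := by infer_instance
    obtain ⟨i, j, hne, heq⟩ := Finite.exists_ne_map_eq_of_infinite f
    rcases lt_or_gt_of_ne hne with h | h
    · exact ⟨i, j, h, le_of_eq heq.symm⟩
    · exact ⟨j, i, h, le_of_eq heq⟩
  | succ m ih =>
    haveI hw : IsWellOrder ℕ (· < ·) := inferInstance
    have hβ : (Set.univ : Set (Fin m → ℕ)).PartiallyWellOrderedOn (· ≤ ·) :=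
      Set.isPWO_of_wellQuasiOrderedLE Set.univ
    have hstep := pwoUpper_step hβ ih
    exact pwoUpper_transfer (Fin.insertNthOrderIso (fun _ => ℕ) 0) hstep


lemma closure_exists_rep {V : Type*} [AddCommMonoid V] (S : Finset V) {b : V}
    (hb : b ∈ AddSubmonoid.closure (S : Set V)) :
    ∃ μ : S → ℕ, ∑ i : S, μ i • (i : V) = b := by
  induction hb using AddSubmonoid.closure_induction with
  | mem x hx =>
    refine ⟨fun i => if i = ⟨x, hx⟩ then 1 else 0, ?_⟩
    rw [Fintype.sum_eq_single (⟨x, hx⟩ : S)]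
    · simp
    · intro t ht
      simp [ht]
  | zero =>
    exact ⟨0, by simp⟩
  | add x y hx hy ihx ihy =>
    obtain ⟨μ₁, h₁⟩ := ihx
    obtain ⟨μ₂, h₂⟩ := ihy
    refine ⟨μ₁ + μ₂, ?_⟩
    simp only [Pi.add_apply, add_smul, Finset.sum_add_distrib, h₁, h₂]

lemma sum_rep_mem {V : Type*} [AddCommMonoid V] (S : Finset V) (μ : S → ℕ) :
    ∑ i : S, μ i • (i : V) ∈ AddSubmonoid.closure (S : Set V) :=
  AddSubmonoid.sum_mem _ fun t _ => AddSubmonoid.nsmul_mem _ (AddSubmonoid.subset_closure (Finset.mem_coe.2 t.2)) _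


end Aux

/-- For a finitely generated monoid `M ⊆ ℤ^d` and a matrix `A ∈ ℤ^{d×n}`, there are only
finitely many fibers of `A` that are atomic with respect to `M`. -/
theorem finitely_many_atomic_fibers {d n : ℕ} (A : Matrix (Fin d) (Fin n) ℤ)
    (M : AddSubmonoid (Fin d → ℤ)) (hM : M.FG) :
    Set.Finite {S : Set (Fin n → ℤ) | ∃ b : Fin d → ℤ, IsAtomicFiber A M b ∧ S = fiber A b} := by
  obtain ⟨S, hS⟩ := hM
  set B₀ : Set (Fin d → ℤ) :=
    {b | IsAtomicFiber A M b ∧ (fiber A b).Nonempty ∧ b ≠ 0} with hB₀def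
  -- the upper closure of a fiber, inside ℕ^n
  set I : (Fin d → ℤ) → Set (Fin n → ℕ) :=
    fun b => {y | ∃ z ∈ fiber A b, z ≤ fun t => (y t : ℤ)} with hIdef
  have hIupper : ∀ b, IsUpperSet (I b) := by
    intro b y y' hyy' hy
    obtain ⟨z, hz, hle⟩ := hy
    exact ⟨z, hz, le_trans hle (fun t => by exact Nat.cast_le.mpr (hyy' t))⟩
  have hB₀ : B₀.Finite := by
    by_contra hinf
    have hinf' : B₀.Infinite := hinf
    set e := hinf'.natEmbedding with he
    set f : ℕ → (Fin d → ℤ) := fun i => (e i : Fin d → ℤ) with hf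
    have hfB : ∀ i, f i ∈ B₀ := fun i => (e i).2
    have hfinj : ∀ i j, i ≠ j → f i ≠ f j := by
      intro i j hij hEq
      exact hij (e.injective (Subtype.coe_injective hEq))
    have hrep : ∀ i, ∃ μ : S → ℕ, ∑ t : S, μ t • (t : Fin d → ℤ) = f i := by
      intro i
      apply closure_exists_rep
      rw [hS]
      exact (hfB i).1.1
    choose μ hμ using hrep
    -- product pwo
    haveI hw : IsWellOrder ℕ (· < ·) := inferInstance
    have hβ : (Set.univ : Set (S → ℕ)).PartiallyWellOrderedOn (· ≤ ·) :=
      Set.isPWO_of_wellQuasiOrderedLE Set.univ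
    have hprod := hβ.prod (pwoUpper n)
    set g : ℕ → (S → ℕ) × Set (Fin n → ℕ) := fun i => (μ i, I (f i)) with hg
    have hgmem : ∀ i, g i ∈ (Set.univ : Set (S → ℕ)) ×ˢ {U : Set (Fin n → ℕ) | IsUpperSet U} :=
      fun i => ⟨Set.mem_univ _, hIupper (f i)⟩
    obtain ⟨i, j, hij, hμle, hIsub⟩ := hprod.exists_lt (f := g) hgmem
    -- decomposition
    set δ : S → ℕ := fun t => μ j t - μ i t with hδ
    set c : Fin d → ℤ := ∑ t : S, δ t • (t : Fin d → ℤ) with hc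
    have hμsum : ∀ t, μ i t + δ t = μ j t := by
      intro t
      have hμle' : ∀ u, μ i u ≤ μ j u := fun u => hμle u
      have := hμle' t
      simp only [hδ]
      omega
    have hb' : f j = f i + c := by
      rw [← hμ j, ← hμ i, hc, ← Finset.sum_add_distrib]
      congr 1
      funext t
      rw [← add_smul, hμsum t]
    have hcM : c ∈ M := by
      rw [← hS]; exact sum_rep_mem S δ
    have hcne : c ≠ 0 := by
      intro h0
      exact hfinj i j (Nat.ne_of_lt hij) (by rw [hb', h0, add_zero])
    -- fiber equality
    have hfib : fiber A (f j) = fiber A (f i) + fiber A c := by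
      apply Set.Subset.antisymm
      · intro z' hz'
        have hz'0 : 0 ≤ z' := hz'.1
        have hz'A : A.mulVec z' = f j := hz'.2
        have hycoe : (fun t => (((z' t).toNat : ℤ))) = z' :=
          funext fun t => Int.toNat_of_nonneg (hz'0 t)
        have hyI : (fun t => (z' t).toNat) ∈ I (f j) :=
          ⟨z', ⟨hz'0, hz'A⟩, le_of_eq hycoe.symm⟩
        obtain ⟨z, hz, hle⟩ := hIsub hyI
        rw [hycoe] at hle
        refine Set.mem_add.2 ⟨z, hz, z' - z, ⟨?_, ?_⟩, by ring⟩
        · intro t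
          simp only [Pi.sub_apply, Pi.zero_apply]
          exact sub_nonneg.2 (hle t)
        · rw [Matrix.mulVec_sub, hz'A, hz.2, hb']
          ring
      · intro z hzmem
        obtain ⟨z₁, hz₁, z₂, hz₂, rfl⟩ := Set.mem_add.1 hzmem
        exact ⟨add_nonneg hz₁.1 hz₂.1, by rw [Matrix.mulVec_add, hz₁.2, hz₂.2, hb']⟩
    exact (hfB j).1.2 ⟨f i, c, (hfB i).1.1, hcM, (hfB i).2.2, hcne, hb', hfib⟩
  -- conclusion
  have hsub : {T : Set (Fin n → ℤ) | ∃ b, IsAtomicFiber A M b ∧ T = fiber A b} ⊆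
      insert ∅ (insert (fiber A 0) ((fiber A) '' B₀)) := by
    rintro T ⟨b, hb, rfl⟩
    by_cases h1 : fiber A b = ∅
    · exact Set.mem_insert_iff.2 (Or.inl h1)
    · by_cases h2 : b = 0
      · subst h2
        exact Set.mem_insert_iff.2 (Or.inr (Set.mem_insert_iff.2 (Or.inl rfl)))
      · exact Set.mem_insert_iff.2 (Or.inr (Set.mem_insert_iff.2 (Or.inr
          ⟨b, ⟨hb, Set.nonempty_iff_ne_empty.2 h1, h2⟩, rfl⟩)))
  exact (((hB₀.image _).insert _).insert _).subset hsub
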